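/- arXiv:2509.06481 — 3 statements merged into one kernel-verified Lean document; each statement's English description precedes it below -/
import Mathlib

section
/- The event-driven max-consensus process (where a vertex broadcasts only when its value changed in the previous round) produces exactly the same value trajectories x_v(t) for all vertices and all times as the always-broadcast max-consensus process, starting from the same initial values on the same graph. -/
/-- The event-driven max-consensus process (broadcast only on
change, everyone broadcasting at round 0) has exactly the same value
trajectories as the always-broadcast max-consensus process from the same
initial values on the same graph. -/
theorem event_driven_eq_always_broadcast
    {V : Type} [Fintype V] [DecidableEq V]
    (G : SimpleGraph V) [DecidableRel G.Adj]
    (x y : V → ℕ → ℝ) (B : V → ℕ → Bool)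
    (hinit : ∀ v, x v 0 = y v 0)
    (hy : ∀ v t, y v (t + 1) =
      (G.neighborFinset v).fold max (y v t) (fun u => y u t))
    (hB0 : ∀ v, B v 0 = true)
    (hB : ∀ v t, B v (t + 1) = decide (x v (t + 1) ≠ x v t))
    (hx : ∀ v t, x v (t + 1) =
      ((G.neighborFinset v).filter (fun u => B u t)).fold max (x v t)
        (fun u => x u t)) :
    ∀ v t, x v t = y v t := by
  -- base value ≤ fold max
  have hbase : ∀ (s : Finset V) (b : ℝ) (f : V → ℝ), b ≤ s.fold max b f := by
    intro s b f
    rw [Finset.le_fold_max]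
    exact Or.inl le_rfl
  have hmem : ∀ (s : Finset V) (b : ℝ) (f : V → ℝ) (u : V), u ∈ s →
      f u ≤ s.fold max b f := by
    intro s b f u hu
    rw [Finset.le_fold_max]
    exact Or.inr ⟨u, hu, le_rfl⟩
  -- x monotone in time (one step)
  have hxstep : ∀ v t, x v t ≤ x v (t + 1) := by
    intro v t; rw [hx]; exact hbase _ _ _
  have hxmono : ∀ v, Monotone (x v) := by
    intro v
    exact monotone_nat_of_le_succ (hxstep v)
  -- last broadcast witness
  have hlast : ∀ u t, ∃ s, s ≤ t ∧ B u s = true ∧ x u s = x u t := by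
    intro u t
    induction t with
    | zero => exact ⟨0, le_rfl, hB0 u, rfl⟩
    | succ n ih =>
      by_cases h : B u (n + 1) = true
      · exact ⟨n + 1, le_rfl, h, rfl⟩
      · have heq : x u (n + 1) = x u n := by
          have h' := h
          rw [hB u n] at h'
          simpa using h'
        obtain ⟨s, hs, hBs, hxs⟩ := ih
        exact ⟨s, hs.trans (Nat.le_succ n), hBs, hxs.trans heq.symm⟩
  -- broadcast reception: if u ~ v and B u s, then x u s ≤ x v (s+1)
  have hrecv : ∀ v u s, G.Adj v u → B u s = true → x u s ≤ x v (s + 1) := by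
    intro v u s hadj hBs
    have hu : u ∈ (G.neighborFinset v).filter (fun w => B w s) := by
      rw [Finset.mem_filter, SimpleGraph.mem_neighborFinset]
      exact ⟨hadj, hBs⟩
    rw [hx]
    exact hmem _ (x v s) (fun w => x w s) u hu
  -- main induction
  intro v t
  induction t generalizing v with
  | zero => exact hinit v
  | succ n ih =>
    apply le_antisymm
    · rw [hx, hy, Finset.fold_max_le]
      constructor
      · rw [ih v]; exact hbase _ _ _
      · intro u hu
        rw [Finset.mem_filter] at hu
        rw [ih u]
        exact hmem _ (y v n) (fun w => y w n) u hu.1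
    · rw [hy, Finset.fold_max_le]
      constructor
      · rw [← ih v]; exact hxstep v n
      · intro u hu
        rw [SimpleGraph.mem_neighborFinset] at hu
        rw [← ih u]
        obtain ⟨s, hs, hBs, hxs⟩ := hlast u n
        calc x u n = x u s := hxs.symm
          _ ≤ x v (s + 1) := hrecv v u s hu hBs
          _ ≤ x v (n + 1) := hxmono v (Nat.succ_le_succ hs)
end

section
/- In the event-driven consensus process on a connected graph of diameter D where one fixed agent-task pair (i*, j*) holds the globally highest bid that never changes thereafter (Statements 2–3), the assignment z and bid y for task j* held by every agent agree with (i*, y_{i*j*}) after at most D additional rounds, even though i* stops broadcasting once its information is unchanged. -/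
/-- Event-driven propagation of the winning (bid, winner) pair
for one task `j*` on a connected graph of diameter `D`.  Agent `istar` holds
the maximal bid `M` (with winner `istar`) from time `t0` on; agents adopt a
received pair when its bid strictly exceeds their own, and broadcast exactly
when their stored pair changed in the previous round (everyone broadcasting at
`t0`).  Within `D` additional rounds every agent stores `(M, istar)`. -/
theorem event_driven_bid_propagation
    {V : Type} [Fintype V] [DecidableEq V]
    (G : SimpleGraph V) [DecidableRel G.Adj] (hconn : G.Connected)
    (D : ℕ) (hD : ∀ u v : V, G.dist u v ≤ D)
    (t0 : ℕ) (y : V → ℕ → ℝ) (z : V → ℕ → Option V) (B : V → ℕ → Bool)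
    (istar : V) (M : ℝ)
    -- `istar` holds the maximal bid with itself as winner at time `t0`
    (histar : y istar t0 = M ∧ z istar t0 = some istar)
    (hmaxbid : ∀ v, y v t0 ≤ M)
    (htie : ∀ v, y v t0 = M → z v t0 = some istar)
    -- value update: adopt the largest broadcast bid if it exceeds one's own
    (hy : ∀ v t, t0 ≤ t → y v (t + 1) =
      ((G.neighborFinset v).filter (fun u => B u t)).fold max (y v t)
        (fun u => y u t))
    -- the winner is adopted together with the bid
    (hz : ∀ v t, t0 ≤ t →
      (y v (t + 1) = y v t → z v (t + 1) = z v t) ∧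
      (y v (t + 1) ≠ y v t → ∃ u ∈ (G.neighborFinset v).filter (fun u => B u t),
        y u t = y v (t + 1) ∧ z v (t + 1) = z u t))
    -- event-driven broadcasting
    (hB0 : ∀ v, B v t0 = true)
    (hB : ∀ v t, t0 ≤ t →
      B v (t + 1) = decide (y v (t + 1) ≠ y v t ∨ z v (t + 1) ≠ z v t)) :
    ∀ t, t0 + D ≤ t → ∀ v, y v t = M ∧ z v t = some istar := by
  classical
  obtain ⟨hy0, hz0⟩ := histar
  -- all bids are bounded by M
  have hub : ∀ n, ∀ v, y v (t0 + n) ≤ M := by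
    intro n
    induction n with
    | zero => simpa using hmaxbid
    | succ n ih =>
      intro v
      have h1 : t0 + (n + 1) = (t0 + n) + 1 := rfl
      rw [h1, hy v (t0 + n) (Nat.le_add_right _ _), Finset.fold_max_le]
      exact ⟨ih v, fun u _ => ih u⟩
  have hub' : ∀ t, t0 ≤ t → ∀ v, y v t ≤ M := by
    intro t ht v
    obtain ⟨n, rfl⟩ := Nat.exists_eq_add_of_le ht
    exact hub n v
  -- bids are monotone
  have hmono : ∀ v t, t0 ≤ t → y v t ≤ y v (t + 1) := by
    intro v t ht
    rw [hy v t ht, Finset.le_fold_max]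
    exact Or.inl le_rfl
  -- having bid M is absorbing
  have habs : ∀ v t, t0 ≤ t → y v t = M → y v (t + 1) = M := by
    intro v t ht h
    exact le_antisymm (hub' (t + 1) (ht.trans (Nat.le_succ t)) v) (h ▸ hmono v t ht)
  have habs' : ∀ v t t', t0 ≤ t → t ≤ t' → y v t = M → y v t' = M := by
    intro v t t' ht htt h
    obtain ⟨n, rfl⟩ := Nat.exists_eq_add_of_le htt
    clear htt
    induction n with
    | zero => exact h
    | succ n ih => exact habs v (t + n) (ht.trans (Nat.le_add_right _ _)) ih
  -- a bid of M carries winner istar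
  have hzM : ∀ n, ∀ v, y v (t0 + n) = M → z v (t0 + n) = some istar := by
    intro n
    induction n with
    | zero => simpa using htie
    | succ n ih =>
      intro v hv
      have ht : t0 ≤ t0 + n := Nat.le_add_right _ _
      by_cases hc : y v (t0 + n + 1) = y v (t0 + n)
      · rw [show t0 + (n + 1) = t0 + n + 1 from rfl, (hz v (t0 + n) ht).1 hc]
        exact ih v (hc.symm.trans hv)
      · obtain ⟨u, hu, hyu, hzu⟩ := (hz v (t0 + n) ht).2 hc
        rw [show t0 + (n + 1) = t0 + n + 1 from rfl, hzu]
        exact ih u (hyu.trans hv)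
  -- when a vertex first attains M, it broadcasts
  have hbst : ∀ v n, y v (t0 + n) = M →
      ∃ m ≤ n, y v (t0 + m) = M ∧ B v (t0 + m) = true := by
    intro v n hn
    have hex : ∃ m, y v (t0 + m) = M := ⟨n, hn⟩
    refine ⟨Nat.find hex, Nat.find_le hn, Nat.find_spec hex, ?_⟩
    rcases Nat.eq_zero_or_eq_succ_pred (Nat.find hex) with h0 | hs
    · rw [h0]
      simpa using hB0 v
    · set k := (Nat.find hex) - 1 with hk
      have hfk : Nat.find hex = k + 1 := hs
      have hne : y v (t0 + k) ≠ M := Nat.find_min hex (by omega)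
      have hM : y v (t0 + k + 1) = M := by
        have := Nat.find_spec hex
        rwa [hfk, show t0 + (k + 1) = t0 + k + 1 from rfl] at this
      rw [hfk, show t0 + (k + 1) = t0 + k + 1 from rfl,
        hB v (t0 + k) (Nat.le_add_right _ _)]
      exact decide_eq_true (Or.inl (by rw [hM]; exact fun h => hne h.symm))
  -- propagation along shortest paths
  have hprop : ∀ d, ∀ v, G.dist istar v ≤ d → ∃ n ≤ d, y v (t0 + n) = M := by
    intro d
    induction d with
    | zero =>
      intro v hv
      have : istar = v := (hconn.dist_eq_zero_iff).mp (Nat.le_zero.mp hv)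
      exact ⟨0, le_rfl, this ▸ hy0⟩
    | succ d ih =>
      intro v hv
      by_cases hle : G.dist istar v ≤ d
      · obtain ⟨n, hn, h⟩ := ih v hle
        exact ⟨n, hn.trans (Nat.le_succ d), h⟩
      · have hd : G.dist istar v = d + 1 := le_antisymm hv (by omega)
        obtain ⟨p, hp⟩ := hconn.exists_walk_length_eq_dist istar v
        have hpl : p.reverse.length = d + 1 := by
          rw [SimpleGraph.Walk.length_reverse, hp, hd]
        cases hpe : p.reverse with
        | nil => rw [hpe] at hpl; simp at hpl
        | @cons _ w _ hadj q =>
          rw [hpe] at hpl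
          simp only [SimpleGraph.Walk.length_cons] at hpl
          have hql : q.length = d := by omega
          have hdw : G.dist istar w ≤ d := by
            rw [SimpleGraph.dist_comm]
            exact hql ▸ SimpleGraph.dist_le q
          obtain ⟨n, hn, hM⟩ := ih w hdw
          obtain ⟨m, hm, hMm, hBm⟩ := hbst w n hM
          refine ⟨m + 1, by omega, ?_⟩
          have hge : M ≤ y v (t0 + m + 1) := by
            rw [hy v (t0 + m) (Nat.le_add_right _ _), Finset.le_fold_max]
            refine Or.inr ⟨w, ?_, hMm.ge⟩
            simp [Finset.mem_filter, G.mem_neighborFinset, hadj, hBm]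
          exact le_antisymm (hub (m + 1) v) hge
  -- conclusion
  intro t ht v
  obtain ⟨n, hn, hM⟩ := hprop D v (hD istar v)
  obtain ⟨k, rfl⟩ := Nat.exists_eq_add_of_le ht
  have h1 : y v (t0 + D + k) = M :=
    habs' v (t0 + n) (t0 + D + k) (Nat.le_add_right _ _) (by omega) hM
  refine ⟨h1, ?_⟩
  have h2 : t0 + D + k = t0 + (D + k) := by omega
  rw [h2] at h1 ⊢
  exact hzM (D + k) v h1
end

section
/- In the event-driven broadcast protocol, the total number of broadcasts by any single vertex over the whole run is at most 1 plus the number of times its stored value changes; since in max-consensus each vertex's value can change at most (number of distinct initial values − 1) times, the total number of broadcasts is at most |V| · (number of distinct initial values). -/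
lemma fold_max_cases {α : Type*} (s : Finset α) (f : α → ℝ) (b : ℝ) :
    s.fold max b f = b ∨ ∃ u ∈ s, s.fold max b f = f u := by
  classical
  induction s using Finset.induction_on with
  | empty => left; simp
  | insert a s ha ih =>
    rw [Finset.fold_insert ha]
    rcases le_total (f a) (s.fold max b f) with h | h
    · rw [max_eq_right h]
      rcases ih with h' | ⟨u, hu, h'⟩
      · left; exact h'
      · right; exact ⟨u, Finset.mem_insert_of_mem hu, h'⟩
    · rw [max_eq_left h]
      right; exact ⟨a, Finset.mem_insert_self a s, rfl⟩

/-- In the event-driven max-consensus protocol, each vertex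
broadcasts at most `1 +` (number of its value changes) times, and since each
value changes at most `m − 1` times (`m` = number of distinct initial values),
the total number of broadcasts over any horizon is at most `|V| · m`. -/
theorem event_driven_broadcast_count
    {V : Type} [Fintype V] [DecidableEq V]
    (G : SimpleGraph V) [DecidableRel G.Adj]
    (x : V → ℕ → ℝ) (B : V → ℕ → Bool)
    (hB0 : ∀ v, B v 0 = true)
    (hB : ∀ v t, B v (t + 1) = decide (x v (t + 1) ≠ x v t))
    (hx : ∀ v t, x v (t + 1) =
      ((G.neighborFinset v).filter (fun u => B u t)).fold max (x v t)
        (fun u => x u t)) :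
    ∀ N : ℕ, ∑ v : V, ((Finset.range N).filter (fun t => B v t)).card ≤
      Fintype.card V * (Finset.univ.image (fun u : V => x u 0)).card := by
  classical
  -- monotonicity of each vertex value
  have hstep : ∀ v t, x v t ≤ x v (t + 1) := by
    intro v t
    rw [hx v t]
    exact (Finset.le_fold_max _).mpr (Or.inl le_rfl)
  have hmono : ∀ v, Monotone (x v) := fun v => monotone_nat_of_le_succ (hstep v)
  -- values stay in the set of initial values
  have hmem : ∀ t v, x v t ∈ Finset.univ.image (fun u : V => x u 0) := by
    intro t
    induction t with
    | zero => intro v; exact Finset.mem_image_of_mem _ (Finset.mem_univ v)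
    | succ t ih =>
      intro v
      rcases fold_max_cases ((G.neighborFinset v).filter (fun u => B u t))
          (fun u => x u t) (x v t) with h | ⟨u, _, h⟩
      · rw [hx v t, h]; exact ih v
      · rw [hx v t, h]; exact ih u
  intro N
  -- per-vertex bound
  have hv : ∀ v : V, ((Finset.range N).filter (fun t => B v t)).card ≤
      (Finset.univ.image (fun u : V => x u 0)).card := by
    intro v
    apply Finset.card_le_card_of_injOn (fun t => x v t)
    · intro t _; exact hmem t v
    · intro t ht t' ht' heq
      by_contra hne
      rcases Nat.lt_or_ge t t' with hlt | hge
      · obtain ⟨s, rfl⟩ := Nat.exists_eq_add_of_lt hlt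
        have hBt' := (Finset.mem_filter.mp ht').2
        rw [hB] at hBt'
        have hne' : x v (t + s + 1) ≠ x v (t + s) := of_decide_eq_true hBt'
        have h1 : x v t ≤ x v (t + s) := hmono v (Nat.le_add_right t s)
        have h2 : x v (t + s) ≤ x v (t + s + 1) := hstep v (t + s)
        simp only at heq
        exact hne' (le_antisymm (heq ▸ h1) h2)
      · have hlt : t' < t := lt_of_le_of_ne hge (fun h => hne h.symm)
        obtain ⟨s, rfl⟩ := Nat.exists_eq_add_of_lt hlt
        have hBt := (Finset.mem_filter.mp ht).2
        rw [hB] at hBt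
        have hne' : x v (t' + s + 1) ≠ x v (t' + s) := of_decide_eq_true hBt
        have h1 : x v t' ≤ x v (t' + s) := hmono v (Nat.le_add_right t' s)
        have h2 : x v (t' + s) ≤ x v (t' + s + 1) := hstep v (t' + s)
        simp only at heq
        exact hne' (le_antisymm (heq.symm ▸ h1) h2)
  calc ∑ v : V, ((Finset.range N).filter (fun t => B v t)).card
      ≤ ∑ _v : V, (Finset.univ.image (fun u : V => x u 0)).card :=
        Finset.sum_le_sum (fun v _ => hv v)
    _ = Fintype.card V * (Finset.univ.image (fun u : V => x u 0)).card := by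
        rw [Finset.sum_const, Finset.card_univ, smul_eq_mul]
end
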